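/- Let B be a real p×q matrix and n ≥ 1. If x ∈ ℝ^p and y ∈ ℝ^q satisfy B y = λ x and Bᵀ x = λ y (i.e., (x,y) is an eigenvector of the block matrix [[0, B],[Bᵀ, 0]] with eigenvalue λ), then the vector w indexed by Fin q ⊕ (Fin n × Fin p), with w(inl j) = √n · y j and w(inr (k,i)) = x i for all k, satisfies D · w = (√n · λ) · w. -/
import Mathlib


open Matrix

/-- The matrix `D` of Construction I: indexed by `Fin q ⊕ (Fin n × Fin p)`,
first block row `[0, Bᵀ, Bᵀ, …, Bᵀ]`, first block column its transpose, other blocks zero. -/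
def matD (p q n : ℕ) (B : Matrix (Fin p) (Fin q) ℝ) :
    Matrix (Fin q ⊕ Fin n × Fin p) (Fin q ⊕ Fin n × Fin p) ℝ :=
  Matrix.of fun a b =>
    match a, b with
    | Sum.inl j, Sum.inr (_, i) => B i j
    | Sum.inr (_, i), Sum.inl j => B i j
    | _, _ => 0

/-- If `(x, y)` is an eigenvector of `[[0, B], [Bᵀ, 0]]` with eigenvalue `λ`, then
`(√n·y, x, …, x)` is an eigenvector of `D` with eigenvalue `√n·λ`. -/
theorem matD_eigenvector (p q n : ℕ) (hn : 1 ≤ n) (B : Matrix (Fin p) (Fin q) ℝ)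
    (x : Fin p → ℝ) (y : Fin q → ℝ) (l : ℝ)
    (hBy : B *ᵥ y = l • x) (hBTx : Bᵀ *ᵥ x = l • y) :
    matD p q n B *ᵥ Sum.elim (fun j => Real.sqrt n * y j) (fun ki => x ki.2) =
      (Real.sqrt n * l) • Sum.elim (fun j => Real.sqrt n * y j) (fun ki => x ki.2) := by
  have hs : Real.sqrt n * Real.sqrt n = n := Real.mul_self_sqrt (Nat.cast_nonneg n)
  funext a
  cases a with
  | inl j =>
    have hj := congrFun hBTx j
    simp [mulVec, dotProduct, transpose_apply] at hj
    simp [matD, mulVec, dotProduct, Fintype.sum_sum_type, Fintype.sum_prod_type]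
    rw [hj]
    ring_nf
    rw [Real.sq_sqrt (Nat.cast_nonneg n)]
    ring
  | inr ki =>
    have hi := congrFun hBy ki.2
    simp [mulVec, dotProduct] at hi
    simp [matD, mulVec, dotProduct, Fintype.sum_sum_type, Fintype.sum_prod_type]
    rw [show (∑ j, B ki.2 j * (Real.sqrt n * y j)) = Real.sqrt n * ∑ j, B ki.2 j * y j by
      rw [Finset.mul_sum]; exact Finset.sum_congr rfl fun _ _ => by ring, hi]
    ring
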